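/- Let A and M be SPD, x the solution of Ax = b, f(v) = ½vᵀAv − bᵀv, and suppose x_k, x_j satisfy f(x_k) ≤ f(x_j). Then with r_i = A(x − x_i), the ratio ‖r_k‖_{M⁻¹}/‖r_j‖_{M⁻¹} ≤ κ(A^{1/2}M⁻¹A^{1/2})^{1/2}. -/

import Mathlib

open scoped Matrix

open scoped Matrix.Norms.L2Operator

/-- The square root of a positive semidefinite matrix, as `Matrix.PosSemidef.sqrt` was defined
in the older Mathlib (removed since). -/
noncomputable def Matrix.PosSemidef.sqrt {n : Type*} [Fintype n] [DecidableEq n]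
    {A : Matrix n n ℝ} (hA : A.PosSemidef) : Matrix n n ℝ :=
  hA.1.eigenvectorUnitary.1 * Matrix.diagonal ((↑) ∘ (√·) ∘ hA.1.eigenvalues) *
    (star hA.1.eigenvectorUnitary : Matrix n n ℝ)

lemma Matrix.PosSemidef.sqrt_mul_self {n : Type*} [Fintype n] [DecidableEq n]
    {A : Matrix n n ℝ} (hA : A.PosSemidef) : hA.sqrt * hA.sqrt = A := by
  have hU : (star hA.1.eigenvectorUnitary : Matrix n n ℝ) * hA.1.eigenvectorUnitary.1 = 1 :=
    Unitary.star_mul_self_of_mem hA.1.eigenvectorUnitary.2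
  have hD : Matrix.diagonal (((↑) ∘ (√·) ∘ hA.1.eigenvalues) : n → ℝ) *
      Matrix.diagonal ((↑) ∘ (√·) ∘ hA.1.eigenvalues) =
      Matrix.diagonal (RCLike.ofReal ∘ hA.1.eigenvalues) := by
    rw [Matrix.diagonal_mul_diagonal]
    congr 1
    funext i
    simp [Real.mul_self_sqrt (hA.eigenvalues_nonneg i)]
  conv_rhs => rw [hA.1.spectral_theorem]
  rw [Matrix.PosSemidef.sqrt, Unitary.conjStarAlgAut_apply]
  calc _ = hA.1.eigenvectorUnitary.1 * Matrix.diagonal ((↑) ∘ (√·) ∘ hA.1.eigenvalues) *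
        ((star hA.1.eigenvectorUnitary : Matrix n n ℝ) * hA.1.eigenvectorUnitary.1) *
        Matrix.diagonal ((↑) ∘ (√·) ∘ hA.1.eigenvalues) *
        (star hA.1.eigenvectorUnitary : Matrix n n ℝ) := by simp only [Matrix.mul_assoc]
    _ = _ := by rw [hU, Matrix.mul_one,
      Matrix.mul_assoc _ (Matrix.diagonal _) (Matrix.diagonal _), hD]

lemma Matrix.PosSemidef.sqrt_isHermitian {n : Type*} [Fintype n] [DecidableEq n]
    {A : Matrix n n ℝ} (hA : A.PosSemidef) : hA.sqrt.IsHermitian := by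
  rw [Matrix.IsHermitian, Matrix.PosSemidef.sqrt, Matrix.conjTranspose_mul,
    Matrix.conjTranspose_mul, Matrix.diagonal_conjTranspose]
  simp [Matrix.mul_assoc, Matrix.star_eq_conjTranspose]


lemma aux_dot_sq {n : ℕ} (X : Matrix (Fin n) (Fin n) ℝ) (v : Fin n → ℝ) :
    v ⬝ᵥ (Xᵀ * X) *ᵥ v = (X *ᵥ v) ⬝ᵥ (X *ᵥ v) := by
  rw [← Matrix.mulVec_mulVec, Matrix.dotProduct_mulVec, Matrix.vecMul_transpose]

lemma aux_dot2 {n : ℕ} (X Y : Matrix (Fin n) (Fin n) ℝ) (v : Fin n → ℝ) :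
    v ⬝ᵥ (Xᵀ * Y * X) *ᵥ v = (X *ᵥ v) ⬝ᵥ Y *ᵥ (X *ᵥ v) := by
  rw [← Matrix.mulVec_mulVec, ← Matrix.mulVec_mulVec, Matrix.dotProduct_mulVec,
    Matrix.vecMul_transpose]

lemma aux_norm_sq {n : ℕ} (w : Fin n → ℝ) :
    w ⬝ᵥ w = ‖(WithLp.equiv 2 (Fin n → ℝ)).symm w‖ ^ 2 := by
  rw [← real_inner_self_eq_norm_sq]
  simp [PiLp.inner_apply, dotProduct, WithLp.equiv, Equiv.refl, mul_comm]
  rw [EuclideanSpace.norm_eq, Real.sq_sqrt (by positivity)]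
  simp [sq]

lemma aux_mulVec_norm_le {n : ℕ} (X : Matrix (Fin n) (Fin n) ℝ) (v : Fin n → ℝ) :
    ‖(WithLp.equiv 2 (Fin n → ℝ)).symm (X *ᵥ v)‖ ≤
      ‖X‖ * ‖(WithLp.equiv 2 (Fin n → ℝ)).symm v‖ :=
  X.l2_opNorm_mulVec (WithLp.toLp 2 v)

set_option maxHeartbeats 800000 in
/-- If `A`, `M` are SPD, `Ax = b`, `f(v) = ½vᵀAv − bᵀv` and `f(x_k) ≤ f(x_j)`, then
with `r_i = A(x − x_i)` we have `‖r_k‖_{M⁻¹}/‖r_j‖_{M⁻¹} ≤ κ(A^{1/2}M⁻¹A^{1/2})^{1/2}`,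
where `κ(X) = ‖X‖‖X⁻¹‖` is the spectral condition number. -/
theorem stmt10 {n : ℕ} (A M : Matrix (Fin n) (Fin n) ℝ) (hA : A.PosDef) (hM : M.PosDef)
    (b x xk xj : Fin n → ℝ) (hx : A.mulVec x = b)
    (f : (Fin n → ℝ) → ℝ)
    (hf : ∀ v, f v = (1 / 2) * (v ⬝ᵥ A.mulVec v) - b ⬝ᵥ v)
    (hle : f xk ≤ f xj) :
    Real.sqrt (A.mulVec (x - xk) ⬝ᵥ M⁻¹.mulVec (A.mulVec (x - xk))) /
        Real.sqrt (A.mulVec (x - xj) ⬝ᵥ M⁻¹.mulVec (A.mulVec (x - xj)))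
      ≤ Real.sqrt (‖hA.posSemidef.sqrt * M⁻¹ * hA.posSemidef.sqrt‖ *
          ‖(hA.posSemidef.sqrt * M⁻¹ * hA.posSemidef.sqrt)⁻¹‖) := by
  have hMi : M⁻¹.PosDef := hM.inv
  set S := hA.posSemidef.sqrt with hSdef
  set T := hMi.posSemidef.sqrt with hTdef
  have hS2 : S * S = A := hA.posSemidef.sqrt_mul_self
  have hT2 : T * T = M⁻¹ := hMi.posSemidef.sqrt_mul_self
  have hSt : Sᵀ = S := by
    have h := hA.posSemidef.sqrt_isHermitian
    rwa [Matrix.IsHermitian, Matrix.conjTranspose_eq_transpose_of_trivial] at h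
  have hTt : Tᵀ = T := by
    have h := hMi.posSemidef.sqrt_isHermitian
    rwa [Matrix.IsHermitian, Matrix.conjTranspose_eq_transpose_of_trivial] at h
  have hAt : Aᵀ = A := by
    have h := hA.isHermitian
    rwa [Matrix.IsHermitian, Matrix.conjTranspose_eq_transpose_of_trivial] at h
  set C := T * S with hCdef
  have hCt : Cᵀ = S * T := by rw [hCdef, Matrix.transpose_mul, hSt, hTt]
  -- determinants and invertibility of C
  have hdetA : A.det ≠ 0 := ne_of_gt hA.det_pos
  have hdetMi : M⁻¹.det ≠ 0 := ne_of_gt hMi.det_pos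
  have hdetS : S.det ≠ 0 := by
    intro h
    apply hdetA
    rw [← hS2, Matrix.det_mul, h, mul_zero]
  have hdetT : T.det ≠ 0 := by
    intro h
    apply hdetMi
    rw [← hT2, Matrix.det_mul, h, mul_zero]
  have hdetC : IsUnit C.det := by
    rw [hCdef, Matrix.det_mul]
    exact isUnit_iff_ne_zero.mpr (mul_ne_zero hdetT hdetS)
  have hCinv : C⁻¹ * C = 1 := Matrix.nonsing_inv_mul C hdetC
  -- key matrix identities
  have hB : S * M⁻¹ * S = Cᵀ * C := by
    rw [hCt, hCdef, ← hT2]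
    noncomm_ring
  have hkey : (C * S)ᵀ * (C * S) = A * M⁻¹ * A := by
    rw [Matrix.transpose_mul, hSt]
    calc S * Cᵀ * (C * S) = S * (Cᵀ * C) * S := by noncomm_ring
    _ = S * (S * M⁻¹ * S) * S := by rw [hB]
    _ = (S * S) * M⁻¹ * (S * S) := by noncomm_ring
    _ = A * M⁻¹ * A := by rw [hS2]
  -- norms of B and B⁻¹
  have hBnorm : ‖S * M⁻¹ * S‖ = ‖C‖ ^ 2 := by
    rw [hB, ← Matrix.conjTranspose_eq_transpose_of_trivial C,
      Matrix.l2_opNorm_conjTranspose_mul_self, sq]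
  have hBinvnorm : ‖(S * M⁻¹ * S)⁻¹‖ = ‖C⁻¹‖ ^ 2 := by
    rw [hB, Matrix.mul_inv_rev, ← Matrix.transpose_nonsing_inv]
    have h' : C⁻¹ * (C⁻¹)ᵀ = ((C⁻¹)ᵀ)ᴴ * (C⁻¹)ᵀ := by
      rw [Matrix.conjTranspose_eq_transpose_of_trivial, Matrix.transpose_transpose]
    rw [h', Matrix.l2_opNorm_conjTranspose_mul_self,
      ← Matrix.conjTranspose_eq_transpose_of_trivial, Matrix.l2_opNorm_conjTranspose, sq]
  -- quadratic form identity
  have hq : ∀ e : Fin n → ℝ, A *ᵥ e ⬝ᵥ M⁻¹ *ᵥ (A *ᵥ e) = ((C * S) *ᵥ e) ⬝ᵥ ((C * S) *ᵥ e) := by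
    intro e
    rw [← aux_dot_sq, hkey, show A * M⁻¹ * A = Aᵀ * M⁻¹ * A from by rw [hAt], aux_dot2]
  -- energy inequality from f xk ≤ f xj
  have hsym : ∀ v, x ⬝ᵥ A *ᵥ v = b ⬝ᵥ v := by
    intro v
    rw [Matrix.dotProduct_mulVec, ← hAt, Matrix.vecMul_transpose, hx]
  have hsym2 : ∀ v, v ⬝ᵥ A *ᵥ x = b ⬝ᵥ v := by
    intro v
    rw [hx, dotProduct_comm]
  have hexp : ∀ v, (x - v) ⬝ᵥ A *ᵥ (x - v) = b ⬝ᵥ x + 2 * f v := by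
    intro v
    rw [hf v, Matrix.mulVec_sub, sub_dotProduct, dotProduct_sub,
      dotProduct_sub, hsym v, hsym2 v, hsym2 x]
    ring
  have henergy : (x - xk) ⬝ᵥ A *ᵥ (x - xk) ≤ (x - xj) ⬝ᵥ A *ᵥ (x - xj) := by
    rw [hexp, hexp]; linarith
  -- set up Euclidean norms
  set E := (WithLp.equiv 2 (Fin n → ℝ)).symm with hE
  set nk := ‖E ((C * S) *ᵥ (x - xk))‖ with hnk
  set nj := ‖E ((C * S) *ᵥ (x - xj))‖ with hnj
  set mk := ‖E (S *ᵥ (x - xk))‖ with hmk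
  set mj := ‖E (S *ᵥ (x - xj))‖ with hmj
  have hqk : A *ᵥ (x - xk) ⬝ᵥ M⁻¹ *ᵥ (A *ᵥ (x - xk)) = nk ^ 2 := by
    rw [hq, aux_norm_sq]
  have hqj : A *ᵥ (x - xj) ⬝ᵥ M⁻¹ *ᵥ (A *ᵥ (x - xj)) = nj ^ 2 := by
    rw [hq, aux_norm_sq]
  have h1 : nk ≤ ‖C‖ * mk := by
    rw [hnk, ← Matrix.mulVec_mulVec]
    exact aux_mulVec_norm_le C (S *ᵥ (x - xk))
  have h2 : mk ^ 2 ≤ mj ^ 2 := by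
    rw [hmk, hmj, ← aux_norm_sq, ← aux_norm_sq, ← aux_dot_sq, ← aux_dot_sq, hSt, hS2]
    exact henergy
  have h3 : mj ≤ ‖C⁻¹‖ * nj := by
    have huj : S *ᵥ (x - xj) = C⁻¹ *ᵥ ((C * S) *ᵥ (x - xj)) := by
      rw [Matrix.mulVec_mulVec, ← Matrix.mul_assoc, hCinv, Matrix.one_mul]
    rw [hmj, huj]
    exact aux_mulVec_norm_le C⁻¹ ((C * S) *ᵥ (x - xj))
  have hmain : nk ^ 2 ≤ (‖C‖ ^ 2 * ‖C⁻¹‖ ^ 2) * nj ^ 2 := by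
    have hnk0 : 0 ≤ nk := norm_nonneg _
    have hmj0 : 0 ≤ mj := norm_nonneg _
    calc nk ^ 2 ≤ (‖C‖ * mk) ^ 2 := pow_le_pow_left₀ hnk0 h1 2
    _ = ‖C‖ ^ 2 * mk ^ 2 := by ring
    _ ≤ ‖C‖ ^ 2 * mj ^ 2 := mul_le_mul_of_nonneg_left h2 (sq_nonneg _)
    _ ≤ ‖C‖ ^ 2 * (‖C⁻¹‖ * nj) ^ 2 :=
        mul_le_mul_of_nonneg_left (pow_le_pow_left₀ hmj0 h3 2) (sq_nonneg _)
    _ = (‖C‖ ^ 2 * ‖C⁻¹‖ ^ 2) * nj ^ 2 := by ring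
  rw [hqk, hqj, hBnorm, hBinvnorm]
  rcases eq_or_ne (Real.sqrt (nj ^ 2)) 0 with h0 | h0
  · rw [h0, div_zero]
    exact Real.sqrt_nonneg _
  · have hpos : 0 < nj ^ 2 := Real.sqrt_ne_zero'.mp h0
    rw [div_le_iff₀ (Real.sqrt_pos.mpr hpos), ← Real.sqrt_mul (mul_nonneg (sq_nonneg _) (sq_nonneg _))]
    exact Real.sqrt_le_sqrt hmain
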